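/- Suppose the drift assumption holds. Then there exists a constant C > 0, depending only on L₁ and r, such that for all x, y ∈ ℝ^d, all α ∈ (0, 1/2), and all η ∈ (0, 1]: | b(y) − b(x)/(1 + η^α ‖∇b(x)‖_op) | ≤ L₁(1 + |x|^r + |y|^r)|x − y| + C η^α (1 + |x|^{2r+1}). -/

import Mathlib

set_option maxHeartbeats 1000000


open scoped RealInnerProductSpace

private lemma aux_rpow_le {a s p : ℝ} (ha : 0 ≤ a) (hs : 0 ≤ s) (hsp : s ≤ p) :
    a ^ s ≤ 1 + a ^ p := by
  rcases le_or_gt a 1 with h | h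
  · have : a ^ s ≤ 1 := Real.rpow_le_one ha h hs
    have hp : 0 ≤ a ^ p := Real.rpow_nonneg ha p
    linarith
  · have : a ^ s ≤ a ^ p := Real.rpow_le_rpow_of_exponent_le h.le hsp
    linarith

private lemma aux_two_rpow {a r : ℝ} (ha : 0 ≤ a) (hr : 0 ≤ r) :
    (a + 1) ^ r ≤ 2 ^ r * (1 + a ^ r) := by
  have h2 : (0:ℝ) < 2 ^ r := Real.rpow_pos_of_pos two_pos r
  have har : 0 ≤ a ^ r := Real.rpow_nonneg ha r
  rcases le_or_gt a 1 with h | h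
  · have h1 : (a + 1) ^ r ≤ 2 ^ r :=
      Real.rpow_le_rpow (by linarith) (by linarith) hr
    nlinarith
  · have h1 : (a + 1) ^ r ≤ (2 * a) ^ r :=
      Real.rpow_le_rpow (by linarith) (by linarith) hr
    rw [Real.mul_rpow (by norm_num) ha] at h1
    nlinarith

theorem stmt8 {d : ℕ} (r L₁ : ℝ) (hr : 0 ≤ r) (hL₁ : 0 < L₁) :
    ∃ C > 0,
      ∀ (b : EuclideanSpace ℝ (Fin d) → EuclideanSpace ℝ (Fin d)) (lam : ℝ),
        0 < lam →
        ContDiff ℝ 1 b →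
        (∀ x, ⟪x, b x⟫ ≤ L₁ - lam * ‖x‖ ^ (r + 2)) →
        (∀ x, ‖b x‖ ≤ L₁ * (1 + ‖x‖ * ‖fderiv ℝ b x‖)) →
        (∀ x y, ‖b x - b y‖ ≤ L₁ * (1 + ‖x‖ ^ r + ‖y‖ ^ r) * ‖x - y‖) →
        ∀ (x y : EuclideanSpace ℝ (Fin d)) (α η : ℝ),
          0 < α → α < 1 / 2 → 0 < η → η ≤ 1 →
          ‖b y - (1 + η ^ α * ‖fderiv ℝ b x‖)⁻¹ • b x‖ ≤
            L₁ * (1 + ‖x‖ ^ r + ‖y‖ ^ r) * ‖x - y‖ +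
              C * η ^ α * (1 + ‖x‖ ^ (2 * r + 1)) := by
  have h2r : (0:ℝ) < 2 ^ r := Real.rpow_pos_of_pos two_pos r
  set M : ℝ := L₁ * (1 + 2 * 2 ^ r) with hM
  have hM0 : 0 < M := by positivity
  refine ⟨2 * L₁ * M + 4 * L₁ * M ^ 2, by positivity, ?_⟩
  intro b lam hlam hb _hb1 hb2 hb3 x y α η hα _hα2 hη hη1
  set a : ℝ := ‖x‖ with ha
  have ha0 : 0 ≤ a := norm_nonneg x
  set D : ℝ := ‖fderiv ℝ b x‖ with hD
  have hD0 : 0 ≤ D := norm_nonneg _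
  have hQ0 : 0 ≤ a ^ (2 * r + 1) := Real.rpow_nonneg ha0 _
  -- Step 1: D ≤ M * (1 + a ^ r)
  have hDle : D ≤ M * (1 + a ^ r) := by
    have hKnn : 0 ≤ L₁ * (1 + 2 * (a + 1) ^ r) := by positivity
    have hlip : ‖fderiv ℝ b x‖ ≤ L₁ * (1 + 2 * (a + 1) ^ r) := by
      refine (hb.differentiable one_ne_zero x).hasFDerivAt.le_of_lip' hKnn ?_
      filter_upwards [Metric.ball_mem_nhds x one_pos] with u hu
      have hu1 : ‖u‖ ≤ a + 1 := by
        have := norm_sub_norm_le u x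
        have hd : ‖u - x‖ < 1 := by simpa [dist_eq_norm] using hu
        linarith
      have h1 : ‖u‖ ^ r ≤ (a + 1) ^ r :=
        Real.rpow_le_rpow (norm_nonneg u) hu1 hr
      have h2 : a ^ r ≤ (a + 1) ^ r :=
        Real.rpow_le_rpow ha0 (by linarith) hr
      calc ‖b u - b x‖ ≤ L₁ * (1 + ‖u‖ ^ r + a ^ r) * ‖u - x‖ := hb3 u x
        _ ≤ L₁ * (1 + 2 * (a + 1) ^ r) * ‖u - x‖ := by
            apply mul_le_mul_of_nonneg_right _ (norm_nonneg _)
            apply mul_le_mul_of_nonneg_left _ hL₁.le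
            linarith
    have har : 0 ≤ a ^ r := Real.rpow_nonneg ha0 r
    have hkey : (a + 1) ^ r ≤ 2 ^ r * (1 + a ^ r) := aux_two_rpow ha0 hr
    calc D ≤ L₁ * (1 + 2 * (a + 1) ^ r) := hlip
      _ ≤ M * (1 + a ^ r) := by rw [hM]; nlinarith
  -- Step 2: basic facts about t = η^α * D
  have hηα : 0 < η ^ α := Real.rpow_pos_of_pos hη α
  set t : ℝ := η ^ α * D with ht
  have ht0 : 0 ≤ t := by positivity
  have h1t : 0 < 1 + t := by linarith
  -- triangle inequality split
  have hsplit : ‖b y - (1 + t)⁻¹ • b x‖ ≤ ‖b y - b x‖ + t * ‖b x‖ := by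
    have : b y - (1 + t)⁻¹ • b x = (b y - b x) + (1 - (1 + t)⁻¹) • b x := by
      rw [sub_smul, one_smul]; abel
    rw [this]
    refine (norm_add_le _ _).trans ?_
    rw [norm_smul, Real.norm_eq_abs]
    have hinv : (1 + t)⁻¹ ≤ 1 := by
      rw [inv_le_one_iff₀]; right; linarith
    have hinv0 : 0 < (1 + t)⁻¹ := inv_pos.mpr h1t
    have habs : |1 - (1 + t)⁻¹| ≤ t := by
      rw [abs_of_nonneg (by linarith)]
      have : 1 - (1 + t)⁻¹ = t * (1 + t)⁻¹ := by
        field_simp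
        ring
      rw [this]
      calc t * (1 + t)⁻¹ ≤ t * 1 := by
            apply mul_le_mul_of_nonneg_left hinv ht0
        _ = t := mul_one t
    exact add_le_add le_rfl (mul_le_mul_of_nonneg_right habs (norm_nonneg _))
  -- bound first term
  have hfirst : ‖b y - b x‖ ≤ L₁ * (1 + a ^ r + ‖y‖ ^ r) * ‖x - y‖ := by
    have := hb3 y x
    rw [norm_sub_rev y x, norm_sub_rev (b y)] at this
    calc ‖b y - b x‖ = ‖b x - b y‖ := (norm_sub_rev _ _)
      _ ≤ L₁ * (1 + ‖y‖ ^ r + a ^ r) * ‖x - y‖ := this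
      _ = L₁ * (1 + a ^ r + ‖y‖ ^ r) * ‖x - y‖ := by ring
  -- bound second term
  have har : 0 ≤ a ^ r := Real.rpow_nonneg ha0 r
  have hbx : ‖b x‖ ≤ L₁ * (1 + a * D) := hb2 x
  have hP2 : 1 + a ^ r ≤ 2 * (1 + a ^ (2 * r + 1)) := by
    have := aux_rpow_le ha0 hr (by linarith : r ≤ 2 * r + 1)
    linarith
  have haP2 : a * (1 + a ^ r) ^ 2 ≤ 4 * (1 + a ^ (2 * r + 1)) := by
    have e1 : a ≤ 1 + a ^ (2 * r + 1) := by
      have := aux_rpow_le ha0 zero_le_one (by linarith : (1:ℝ) ≤ 2 * r + 1)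
      simpa [Real.rpow_one] using this
    have e2 : a * a ^ r ≤ 1 + a ^ (2 * r + 1) := by
      have h : a * a ^ r = a ^ (1 + r) := by
        rw [Real.rpow_add' ha0 (by linarith), Real.rpow_one]
      rw [h]
      exact aux_rpow_le ha0 (by linarith) (by linarith)
    have e3 : a * (a ^ r) ^ 2 ≤ 1 + a ^ (2 * r + 1) := by
      have h : a * (a ^ r) ^ 2 = a ^ (2 * r + 1) := by
        rw [← Real.rpow_natCast (a ^ r) 2, ← Real.rpow_mul ha0]
        rw [show ((2:ℕ):ℝ) = (2:ℝ) by norm_num]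
        nth_rewrite 1 [show a = a ^ (1:ℝ) from (Real.rpow_one a).symm]
        rw [← Real.rpow_add' ha0 (by linarith)]
        ring_nf
      rw [h]; linarith
    nlinarith
  have hsecond : t * ‖b x‖ ≤ (2 * L₁ * M + 4 * L₁ * M ^ 2) * η ^ α * (1 + a ^ (2 * r + 1)) := by
    calc t * ‖b x‖ ≤ t * (L₁ * (1 + a * D)) := by
          apply mul_le_mul_of_nonneg_left hbx ht0
      _ = η ^ α * (L₁ * D + L₁ * a * D ^ 2) := by rw [ht]; ring
      _ ≤ η ^ α * (L₁ * (M * (1 + a ^ r)) + L₁ * (a * (M * (1 + a ^ r)) ^ 2)) := by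
          apply mul_le_mul_of_nonneg_left _ hηα.le
          have hD2 : D ^ 2 ≤ (M * (1 + a ^ r)) ^ 2 := by nlinarith
          have h1 : L₁ * D ≤ L₁ * (M * (1 + a ^ r)) :=
            mul_le_mul_of_nonneg_left hDle hL₁.le
          have h2 : L₁ * a * D ^ 2 ≤ L₁ * (a * (M * (1 + a ^ r)) ^ 2) := by
            calc L₁ * a * D ^ 2 = (L₁ * a) * D ^ 2 := by ring
              _ ≤ (L₁ * a) * (M * (1 + a ^ r)) ^ 2 :=
                mul_le_mul_of_nonneg_left hD2 (mul_nonneg hL₁.le ha0)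
              _ = L₁ * (a * (M * (1 + a ^ r)) ^ 2) := by ring
          linarith
      _ ≤ η ^ α * (L₁ * M * (2 * (1 + a ^ (2 * r + 1))) + L₁ * M ^ 2 * (4 * (1 + a ^ (2 * r + 1)))) := by
          apply mul_le_mul_of_nonneg_left _ hηα.le
          have h1 : L₁ * (M * (1 + a ^ r)) ≤ L₁ * M * (2 * (1 + a ^ (2 * r + 1))) := by
            have := mul_le_mul_of_nonneg_left hP2 (mul_pos hL₁ hM0).le
            nlinarith
          have h2 : L₁ * (a * (M * (1 + a ^ r)) ^ 2) ≤ L₁ * M ^ 2 * (4 * (1 + a ^ (2 * r + 1))) := by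
            calc L₁ * (a * (M * (1 + a ^ r)) ^ 2) = (L₁ * M ^ 2) * (a * (1 + a ^ r) ^ 2) := by ring
              _ ≤ (L₁ * M ^ 2) * (4 * (1 + a ^ (2 * r + 1))) :=
                mul_le_mul_of_nonneg_left haP2 (by positivity)
              _ = L₁ * M ^ 2 * (4 * (1 + a ^ (2 * r + 1))) := by ring
          linarith
      _ = (2 * L₁ * M + 4 * L₁ * M ^ 2) * η ^ α * (1 + a ^ (2 * r + 1)) := by ring
  calc ‖b y - (1 + t)⁻¹ • b x‖ ≤ ‖b y - b x‖ + t * ‖b x‖ := hsplit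
    _ ≤ L₁ * (1 + a ^ r + ‖y‖ ^ r) * ‖x - y‖ +
        (2 * L₁ * M + 4 * L₁ * M ^ 2) * η ^ α * (1 + a ^ (2 * r + 1)) :=
      add_le_add hfirst hsecond
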